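/- Let P = (p_1, …, p_n) be a path in a graph G, let u, v ∈ V(P) with u before v on P, and let T be a positive chain extension of (u, v) with respect to P with |T| = 2. Then the two jumps Z(T_1) and Z(T_2) realizing the two elements of T are vertex-disjoint except possibly at endpoints prescribed by the definition; in particular the odd path and the even path of T are disjoint. -/

import Mathlib

/-- The vertex set of the path `p 0, p 1, …, p n`. -/
def PathVerts {V : Type*} (p : ℕ → V) (n : ℕ) : Set V := {w | ∃ i, i ≤ n ∧ p i = w}

/-- The walk `Z` is a jump between `p a` and `p b` with respect to the path
`p 0, …, p n`: `Z` is a path, internally vertex-disjoint from the path and edge-disjoint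
from the path. -/
def IsJumpWalk {V : Type*} (G : SimpleGraph V) (p : ℕ → V) (n : ℕ) (a b : ℕ)
    (Z : G.Walk (p a) (p b)) : Prop :=
  Z.IsPath ∧
  (∀ w ∈ Z.support, w ≠ p a → w ≠ p b → w ∉ PathVerts p n) ∧
  (∀ i, i < n → s(p i, p (i + 1)) ∉ Z.edges)

/-- There exists a jump between `p a` and `p b` with respect to the path `p 0, …, p n`. -/
def HasJump {V : Type*} (G : SimpleGraph V) (p : ℕ → V) (n a b : ℕ) : Prop :=
  ∃ Z : G.Walk (p a) (p b), IsJumpWalk G p n a b Z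

/-- `(p a, p b)` are the endpoints of the maximum positive jump out of the interval
`(p i, p j)` with respect to the path `p 0, …, p n`: a jump exists between `p a` and
`p b` with `i < a < j < b ≤ n`, the far endpoint `b` is as far beyond `j` as possible,
and among jumps to `p b` the near endpoint `a` minimises the distance to `b` along the
path. -/
def IsMaxPosJump {V : Type*} (G : SimpleGraph V) (p : ℕ → V) (n i j a b : ℕ) : Prop :=
  i < a ∧ a < j ∧ j < b ∧ b ≤ n ∧ HasJump G p n a b ∧
  (∀ a' b', i < a' → a' < j → j < b' → b' ≤ n → HasJump G p n a' b' → b' ≤ b) ∧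
  (∀ a', i < a' → a' < j → HasJump G p n a' b → a' ≤ a)

private lemma first_reach10 {V : Type*} {G : SimpleGraph V} (S : Set V) :
    ∀ {u v : V} (q : G.Walk u v), (∃ w ∈ q.support, w ∈ S) →
      ∃ w', w' ∈ S ∧ ∃ r : G.Walk u w',
        (∀ x ∈ r.support, x ∈ q.support) ∧ (∀ e ∈ r.edges, e ∈ q.edges) ∧
        (∀ x ∈ r.support, x ∈ S → x = w') ∧ (q.IsPath → r.IsPath) ∧
        ∃ r₂ : G.Walk w' v, q = r.append r₂ := by
  intro u v q
  induction q with
  | nil =>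
    rintro ⟨w, hw, hwS⟩
    rw [SimpleGraph.Walk.mem_support_nil_iff] at hw
    subst hw
    exact ⟨w, hwS, SimpleGraph.Walk.nil, by simp, by simp, by simp,
      fun _ => SimpleGraph.Walk.IsPath.nil, SimpleGraph.Walk.nil, rfl⟩
  | cons hab q ih =>
    rename_i a b c
    rintro ⟨w, hw, hwS⟩
    by_cases ha : a ∈ S
    · exact ⟨a, ha, SimpleGraph.Walk.nil, by simp, by simp, by simp,
        fun _ => SimpleGraph.Walk.IsPath.nil, SimpleGraph.Walk.cons hab q, rfl⟩
    · have hq : ∃ w ∈ q.support, w ∈ S := by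
        refine ⟨w, ?_, hwS⟩
        rw [SimpleGraph.Walk.support_cons, List.mem_cons] at hw
        rcases hw with rfl | h
        · exact absurd hwS ha
        · exact h
      obtain ⟨w', hw'S, r, hsub, hesub, hfirst, hpath, r₂, hr₂⟩ := ih hq
      refine ⟨w', hw'S, SimpleGraph.Walk.cons hab r, ?_, ?_, ?_, ?_, r₂,
        by rw [SimpleGraph.Walk.cons_append, ← hr₂]⟩
      · intro x hx
        rw [SimpleGraph.Walk.support_cons, List.mem_cons] at hx ⊢
        rcases hx with rfl | h
        · exact Or.inl rfl
        · exact Or.inr (hsub x h)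
      · intro e he
        rw [SimpleGraph.Walk.edges_cons] at he ⊢
        rcases List.mem_cons.mp he with rfl | h
        · exact List.mem_cons_self
        · exact List.mem_cons_of_mem _ (hesub e h)
      · intro x hx hxS
        rw [SimpleGraph.Walk.support_cons, List.mem_cons] at hx
        rcases hx with rfl | h
        · exact absurd hxS ha
        · exact hfirst x h hxS
      · intro hp
        rw [SimpleGraph.Walk.cons_isPath_iff] at hp ⊢
        exact ⟨hpath hp.1, fun h => hp.2 (hsub a h)⟩

/-- Let `P = p 0, …, p n` be a path in `G`, `u = p i` before `v = p j` on `P`, and let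
`T = [(x1,y1),(x2,y2)]` be a positive chain extension of `(u,v)` of length `2`: so
`(x1,y1)` is the maximum positive jump out of `(u,v)` and `(x2,y2)` is the maximum
positive jump out of `(u, y1)`. Then any jumps `Z1` and `Z2` realizing the two elements
of `T` are vertex-disjoint; in particular the odd path and the even path of `T` are
disjoint. -/
theorem stmt10 {V : Type*} (G : SimpleGraph V) (p : ℕ → V) (n : ℕ)
    (hinj : ∀ i j, i ≤ n → j ≤ n → p i = p j → i = j)
    (hadj : ∀ i, i < n → G.Adj (p i) (p (i + 1)))
    (i j x1 y1 x2 y2 : ℕ) (hij : i < j) (hjn : j ≤ n)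
    (h1 : IsMaxPosJump G p n i j x1 y1)
    (h2 : IsMaxPosJump G p n i y1 x2 y2)
    (Z1 : G.Walk (p x1) (p y1)) (hZ1 : IsJumpWalk G p n x1 y1 Z1)
    (Z2 : G.Walk (p x2) (p y2)) (hZ2 : IsJumpWalk G p n x2 y2 Z2) :
    ∀ w ∈ Z1.support, w ∉ Z2.support := by
  classical
  intro w hw1 hw2
  obtain ⟨h1a, h1b, h1c, h1d, -, h1max, -⟩ := h1
  obtain ⟨h2a, h2b, h2c, h2d, -, -, -⟩ := h2
  obtain ⟨hZ1p, hZ1s, hZ1e⟩ := hZ1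
  obtain ⟨hZ2p, hZ2s, hZ2e⟩ := hZ2
  have hx2n : x2 ≤ n := (h2b.le.trans h1d)
  have hy1n : y1 ≤ n := h1d
  obtain ⟨w', hw'S, r, hsub, hesub, hfirst, hpath, r₂, hr₂⟩ :=
    first_reach10 {x | x ∈ Z2.support} Z1 ⟨w, hw1, hw2⟩
  have hw'Z2 : w' ∈ Z2.support := hw'S
  set d := Z2.dropUntil w' hw'Z2 with hd
  have hdsub : ∀ x ∈ d.support, x ∈ Z2.support :=
    fun x hx => Z2.support_dropUntil_subset hw'Z2 hx
  have hdpath : d.IsPath := hZ2p.dropUntil hw'Z2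
  have hrpath : r.IsPath := hpath hZ1p
  -- fact: p y1 ∉ r.support
  have hA : p y1 ∉ r.support := by
    intro hmem
    have hnodup : (r.append r₂).support.Nodup := by
      rw [← hr₂]; exact hZ1p.support_nodup
    rw [SimpleGraph.Walk.support_append] at hnodup
    have hdisj := List.disjoint_of_nodup_append hnodup
    have hy1r₂ : p y1 ∈ r₂.support := SimpleGraph.Walk.end_mem_support r₂
    rw [r₂.support_eq_cons, List.mem_cons] at hy1r₂
    rcases hy1r₂ with heq | htail
    · -- p y1 = w' ∈ Z2.support, but p y1 is an interior path vertex for Z2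
      have hy1Z2 : p y1 ∈ Z2.support := heq ▸ hw'Z2
      have hne1 : p y1 ≠ p x2 := fun h => absurd (hinj y1 x2 hy1n hx2n h) (by omega)
      have hne2 : p y1 ≠ p y2 := fun h => absurd (hinj y1 y2 hy1n h2d h) (by omega)
      exact hZ2s (p y1) hy1Z2 hne1 hne2 ⟨y1, hy1n, rfl⟩
    · exact hdisj hmem htail
  -- fact: if p x2 ∈ d.support then w' = p x2 and p x2 = p x1
  have hB : p x2 ∈ d.support → p x2 = p x1 := by
    intro hmem
    have hsplit : (Z2.takeUntil w' hw'Z2).append d = Z2 := Z2.take_spec hw'Z2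
    have hnodup : ((Z2.takeUntil w' hw'Z2).append d).support.Nodup := by
      rw [hsplit]; exact hZ2p.support_nodup
    rw [SimpleGraph.Walk.support_append] at hnodup
    have hdisj := List.disjoint_of_nodup_append hnodup
    have hx2t : p x2 ∈ (Z2.takeUntil w' hw'Z2).support :=
      SimpleGraph.Walk.start_mem_support _
    have hwx2 : p x2 = w' := by
      have hm := hmem
      rw [d.support_eq_cons, List.mem_cons] at hm
      rcases hm with h | h
      · exact h
      · exact (hdisj hx2t h).elim
    -- now w' = p x2 ∈ Z1.support
    have hw'Z1 : w' ∈ Z1.support := hsub w' (SimpleGraph.Walk.end_mem_support r)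
    have hx2Z1 : p x2 ∈ Z1.support := by rw [hwx2]; exact hw'Z1
    by_contra hne1
    have hne2 : p x2 ≠ p y1 := fun h => absurd (hinj x2 y1 hx2n hy1n h) (by omega)
    exact hZ1s (p x2) hx2Z1 hne1 hne2 ⟨x2, hx2n, rfl⟩
  -- build the spliced walk W : p x1 → p y2
  set W : G.Walk (p x1) (p y2) := r.append d with hW
  have hWpath : W.IsPath := by
    apply SimpleGraph.Walk.IsPath.mk'
    rw [hW, SimpleGraph.Walk.support_append]
    refine List.Nodup.append hrpath.support_nodup hdpath.support_nodup.tail ?_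
    intro x hxr hxdt
    have hxd : x ∈ d.support := by
      rw [d.support_eq_cons]; exact List.mem_cons_of_mem _ hxdt
    have hxw' : x = w' := hfirst x hxr (hdsub x hxd)
    subst hxw'
    have := hdpath.support_nodup
    rw [d.support_eq_cons, List.nodup_cons] at this
    exact this.1 hxdt
  have hWsupp : ∀ x ∈ W.support, x ≠ p x1 → x ≠ p y2 → x ∉ PathVerts p n := by
    intro x hx hne1 hne2 hxP
    rw [hW, SimpleGraph.Walk.mem_support_append_iff] at hx
    rcases hx with hx | hx
    · by_cases hy1 : x = p y1
      · exact hA (hy1 ▸ hx)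
      · exact hZ1s x (hsub x hx) hne1 hy1 hxP
    · by_cases hx2 : x = p x2
      · exact hne1 (hx2 ▸ hB (hx2 ▸ hx))
      · exact hZ2s x (hdsub x hx) hx2 hne2 hxP
  have hWedge : ∀ k, k < n → s(p k, p (k + 1)) ∉ W.edges := by
    intro k hk hmem
    rw [hW, SimpleGraph.Walk.edges_append, List.mem_append] at hmem
    rcases hmem with hm | hm
    · exact hZ1e k hk (hesub _ hm)
    · exact hZ2e k hk (Z2.edges_dropUntil_subset hw'Z2 hm)
  have hjump : HasJump G p n x1 y2 := ⟨W, hWpath, hWsupp, hWedge⟩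
  have := h1max x1 y2 h1a h1b (h1c.trans h2c) h2d hjump
  omega
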